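/- If two allocations A and A' both maximize the leximin ordering over a convex set of feasible utility vectors, then they induce the same utility for every agent. Formally: let F ⊆ ℝ^n be a convex set of utility vectors, and suppose u, v ∈ F are both leximin-optimal in F (i.e., their sorted vectors are maximal in the lexicographic order among sorted vectors of elements of F). Then u = v. -/

import Mathlib

/-- The non-decreasing rearrangement of a vector. -/
noncomputable def sortVec {n : ℕ} (x : Fin n → ℝ) : Fin n → ℝ := x ∘ Tuple.sort x

/-- Leximin (weak) order: compare sorted vectors lexicographically. -/
noncomputable def leximinLE {n : ℕ} (x y : Fin n → ℝ) : Prop :=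
  toLex (sortVec x) ≤ toLex (sortVec y)

lemma strictMono_val_le {k n : ℕ} {g : Fin k → Fin n} (hg : StrictMono g) (i : Fin k) :
    (i : ℕ) ≤ (g i : ℕ) := by
  obtain ⟨m, hm⟩ := i
  induction m with
  | zero => exact Nat.zero_le _
  | succ m ih =>
    have hmk : m < k := Nat.lt_of_succ_lt hm
    have h1 := ih hmk
    have h2 : g ⟨m, hmk⟩ < g ⟨m + 1, hm⟩ := hg (by simp [Fin.lt_def])
    have h3 := Fin.lt_def.mp h2
    simp only [Fin.val_mk] at h1 h3 ⊢
    omega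

/-- Sum of a monotone vector over the bottom `T.card` indices is at most the sum over `T`. -/
lemma sum_bot_le {n : ℕ} (y : Fin n → ℝ) (hy : Monotone y) (T : Finset (Fin n)) :
    ∑ i ∈ Finset.univ.filter (fun i : Fin n => (i : ℕ) < T.card), y i ≤ ∑ i ∈ T, y i := by
  set k := T.card with hk
  have hkn : k ≤ n := by simpa using T.card_le_univ
  have hT : T = Finset.univ.map (T.orderEmbOfFin hk.symm).toEmbedding := by
    refine (Finset.eq_of_subset_of_card_le ?_ ?_).symm
    · intro i hi
      simp only [Finset.mem_map, Finset.mem_univ, true_and] at hi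
      obtain ⟨j, rfl⟩ := hi
      exact Finset.orderEmbOfFin_mem T hk.symm j
    · rw [Finset.card_map, Finset.card_univ]; simp [hk]
  have hB : Finset.univ.filter (fun i : Fin n => (i : ℕ) < k)
      = Finset.univ.map (Fin.castLEOrderEmb hkn).toEmbedding := by
    ext i
    simp only [Finset.mem_filter, Finset.mem_univ, true_and, Finset.mem_map,
      RelEmbedding.coe_toEmbedding, Fin.castLEOrderEmb_apply]
    constructor
    · intro h; exact ⟨⟨i, h⟩, rfl⟩
    · rintro ⟨j, rfl⟩; simpa using j.isLt
  rw [hB, hT, Finset.sum_map, Finset.sum_map]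
  apply Finset.sum_le_sum
  intro j _
  apply hy
  rw [Fin.le_def]
  exact strictMono_val_le (T.orderEmbOfFin hk.symm).strictMono j

/-- Sum of the bottom `S.card` sorted values is at most the sum of `x` over `S`. -/
lemma bottom_sum_le {n : ℕ} (x : Fin n → ℝ) (S : Finset (Fin n)) :
    ∑ i ∈ Finset.univ.filter (fun i : Fin n => (i : ℕ) < S.card), sortVec x i
      ≤ ∑ i ∈ S, x i := by
  have h1 : ∑ i ∈ S, x i = ∑ i ∈ S.map (Tuple.sort x).symm.toEmbedding, sortVec x i := by
    rw [Finset.sum_map]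
    refine Finset.sum_congr rfl fun i _ => ?_
    simp [sortVec]
  rw [h1]
  have h2 := sum_bot_le (sortVec x) (Tuple.monotone_sort x) (S.map (Tuple.sort x).symm.toEmbedding)
  rwa [Finset.card_map] at h2

lemma sum_sq_sortVec {n : ℕ} (x : Fin n → ℝ) :
    ∑ i, (sortVec x i) ^ 2 = ∑ i, (x i) ^ 2 := by
  simpa [sortVec] using Equiv.sum_comp (Tuple.sort x) (fun i => (x i) ^ 2)

/-- If `m = (u+v)/2` where `u, v` have the same sorted vector, and `m` is leximin-below `u`,
then `m` has the same sorted vector as `u`. -/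
lemma sortVec_mid_eq {n : ℕ} (u v m : Fin n → ℝ)
    (hm : ∀ i, m i = (u i + v i) / 2)
    (hsuv : sortVec u = sortVec v)
    (hle : toLex (sortVec m) ≤ toLex (sortVec u)) :
    sortVec m = sortVec u := by
  rcases eq_or_lt_of_le hle with h | h
  · exact toLex.injective h
  exfalso
  obtain ⟨j, hpre, hj⟩ := h
  set B : Finset (Fin n) := Finset.univ.filter (fun i : Fin n => (i : ℕ) < (j : ℕ) + 1) with hB
  have hmemB : ∀ i : Fin n, i ∈ B ↔ i ≤ j := by
    intro i
    rw [hB, Finset.mem_filter]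
    simp only [Finset.mem_univ, true_and, Fin.le_def]
    omega
  -- strict inequality on the bottom block
  have hsum1 : ∑ i ∈ B, sortVec m i < ∑ i ∈ B, sortVec u i := by
    apply Finset.sum_lt_sum
    · intro i hi
      rcases lt_or_eq_of_le ((hmemB i).mp hi) with hlt | rfl
      · exact le_of_eq (hpre i hlt)
      · exact le_of_lt hj
    · exact ⟨j, (hmemB j).mpr le_rfl, hj⟩
  -- the reverse inequality via convexity
  set T : Finset (Fin n) := B.map (Tuple.sort m).toEmbedding with hT
  have hTcard : T.card = (j : ℕ) + 1 := by
    rw [hT, Finset.card_map, hB]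
    have : Finset.univ.filter (fun i : Fin n => (i : ℕ) < (j : ℕ) + 1) = Finset.Iic j := by
      ext i
      rw [Finset.mem_filter, Finset.mem_Iic]
      simp only [Finset.mem_univ, true_and, Fin.le_def]
      omega
    rw [this, Fin.card_Iic]
  have hBsortm : ∑ i ∈ B, sortVec m i = ∑ i ∈ T, m i := by
    rw [hT, Finset.sum_map]
    exact Finset.sum_congr rfl fun i _ => rfl
  have hfilterT : Finset.univ.filter (fun i : Fin n => (i : ℕ) < T.card) = B := by
    rw [hTcard, hB]
  have hu' := bottom_sum_le u T
  have hv' := bottom_sum_le v T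
  rw [hfilterT] at hu' hv'
  rw [← hsuv] at hv'
  have hmT : ∑ i ∈ T, m i = (∑ i ∈ T, u i + ∑ i ∈ T, v i) / 2 := by
    rw [← Finset.sum_add_distrib, Finset.sum_div]
    exact Finset.sum_congr rfl fun i _ => hm i
  rw [hBsortm, hmT] at hsum1
  linarith

/-- If two utility vectors in a convex set `F` are both leximin-optimal in `F`,
then they are equal. -/
theorem leximin_optimal_unique {n : ℕ} (F : Set (Fin n → ℝ)) (hF : Convex ℝ F)
    (u v : Fin n → ℝ) (hu : u ∈ F) (hv : v ∈ F)
    (hmaxu : ∀ w ∈ F, leximinLE w u) (hmaxv : ∀ w ∈ F, leximinLE w v) :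
    u = v := by
  have hsuv : sortVec u = sortVec v :=
    toLex.injective (le_antisymm (hmaxv u hu) (hmaxu v hv))
  set m : Fin n → ℝ := (1/2 : ℝ) • u + (1/2 : ℝ) • v with hmdef
  have hmF : m ∈ F := hF hu hv (by norm_num) (by norm_num) (by norm_num)
  have hm : ∀ i, m i = (u i + v i) / 2 := by
    intro i; simp [hmdef]; ring
  have hsm : sortVec m = sortVec u := sortVec_mid_eq u v m hm hsuv (hmaxu m hmF)
  -- sums of squares agree
  have hqm : ∑ i, (m i) ^ 2 = ∑ i, (u i) ^ 2 := by
    rw [← sum_sq_sortVec m, ← sum_sq_sortVec u, hsm]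
  have hqv : ∑ i, (v i) ^ 2 = ∑ i, (u i) ^ 2 := by
    rw [← sum_sq_sortVec v, ← sum_sq_sortVec u, hsuv]
  have hkey : ∑ i, (u i - v i) ^ 2 = 0 := by
    have hexp : ∀ i : Fin n, (u i - v i) ^ 2
        = 2 * (u i) ^ 2 + 2 * (v i) ^ 2 - 4 * (m i) ^ 2 := by
      intro i; rw [hm i]; ring
    calc ∑ i, (u i - v i) ^ 2
        = ∑ i, (2 * (u i) ^ 2 + 2 * (v i) ^ 2 - 4 * (m i) ^ 2) :=
          Finset.sum_congr rfl fun i _ => hexp i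
      _ = 2 * (∑ i, (u i) ^ 2) + 2 * (∑ i, (v i) ^ 2) - 4 * (∑ i, (m i) ^ 2) := by
          rw [Finset.sum_sub_distrib, Finset.sum_add_distrib, ← Finset.mul_sum,
            ← Finset.mul_sum, ← Finset.mul_sum]
      _ = 0 := by rw [hqm, hqv]; ring
  funext i
  have h0 : ∀ i ∈ Finset.univ, (0:ℝ) ≤ (u i - v i) ^ 2 := fun i _ => sq_nonneg _
  have h1 := (Finset.sum_eq_zero_iff_of_nonneg h0).mp hkey i (Finset.mem_univ i)
  have h2 : u i - v i = 0 := pow_eq_zero_iff (by norm_num) |>.mp h1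
  linarith
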